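/- Let U be a nonprincipal ultrafilter on the set of prime numbers, and for each prime p let F̄_p denote an algebraic closure of the field with p elements (e.g., AlgebraicClosure (ZMod p)). Then the field ℂ of complex numbers is isomorphic as a ring to the ultraproduct (∏_p F̄_p)/I_U. -/

import Mathlib

def ultraIdeal {ι : Type*} (R : ι → Type*) [∀ i, CommRing (R i)] (U : Ultrafilter ι) :
    Ideal (∀ i, R i) where
  carrier := {f | {i | f i = 0} ∈ U}
  zero_mem' := Filter.univ_mem' (fun i => rfl)
  add_mem' := by
    intro f g hf hg
    refine U.toFilter.mem_of_superset (Filter.inter_mem hf hg) ?_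
    rintro i ⟨hfi, hgi⟩
    simp only [Set.mem_setOf_eq] at *
    rw [Pi.add_apply, hfi, hgi, add_zero]
  smul_mem' := by
    intro c f hf
    refine U.toFilter.mem_of_superset hf ?_
    intro i hfi
    simp only [Set.mem_setOf_eq] at *
    rw [smul_eq_mul, Pi.mul_apply, hfi, mul_zero]

/-- An algebraic closure of the prime field with `p` elements. -/
def FBar (p : Nat.Primes) : Type :=
  haveI : Fact p.1.Prime := ⟨p.2⟩
  AlgebraicClosure (ZMod p.1)

noncomputable instance (p : Nat.Primes) : Field (FBar p) :=
  haveI : Fact p.1.Prime := ⟨p.2⟩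
  inferInstanceAs (Field (AlgebraicClosure (ZMod p.1)))


noncomputable instance (p : Nat.Primes) : IsAlgClosed (FBar p) :=
  haveI : Fact p.1.Prime := ⟨p.2⟩
  inferInstanceAs (IsAlgClosed (AlgebraicClosure (ZMod p.1)))

instance (p : Nat.Primes) : CharP (FBar p) p.1 :=
  haveI : Fact p.1.Prime := ⟨p.2⟩
  inferInstanceAs (CharP (AlgebraicClosure (ZMod p.1)) p.1)

lemma fbar_card (p : Nat.Primes) : Cardinal.mk (FBar p) ≤ Cardinal.aleph0 := by
  haveI : Fact p.1.Prime := ⟨p.2⟩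
  have h := Algebra.IsAlgebraic.cardinalMk_le_max (ZMod p.1) (AlgebraicClosure (ZMod p.1))
  have h2 : Cardinal.mk (ZMod p.1) ≤ Cardinal.aleph0 :=
    (Cardinal.lt_aleph0_of_finite _).le
  exact le_trans h (max_le h2 le_rfl)

lemma mem_ultraIdeal {ι : Type*} {R : ι → Type*} [∀ i, CommRing (R i)] {U : Ultrafilter ι}
    {f : ∀ i, R i} : f ∈ ultraIdeal R U ↔ {i | f i = 0} ∈ U := Iff.rfl

lemma ultraIdeal_isMaximal {ι : Type*} (R : ι → Type*) [∀ i, Field (R i)]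
    (U : Ultrafilter ι) : (ultraIdeal R U).IsMaximal := by
  refine Ideal.Quotient.maximal_of_isField _ ⟨⟨0, 1, ?_⟩, mul_comm, ?_⟩
  · intro h
    have h1 : ((1 : ∀ i, R i)) ∈ ultraIdeal R U := by
      rw [← Ideal.Quotient.eq_zero_iff_mem, map_one, ← h]
    rw [mem_ultraIdeal] at h1
    have : ({i | (1 : ∀ i, R i) i = 0} : Set ι) = ∅ := by
      ext i; simp
    rw [this] at h1
    exact Filter.empty_notMem U.toFilter h1
  · intro a ha
    obtain ⟨f, rfl⟩ := Ideal.Quotient.mk_surjective a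
    have hI : f ∉ ultraIdeal R U := fun h => ha (Ideal.Quotient.eq_zero_iff_mem.mpr h)
    have hc : {i | f i = 0}ᶜ ∈ U := Ultrafilter.compl_mem_iff_notMem.mpr hI
    refine ⟨Ideal.Quotient.mk _ (fun i => (f i)⁻¹), ?_⟩
    rw [← map_one (Ideal.Quotient.mk (ultraIdeal R U)), ← map_mul,
      Ideal.Quotient.mk_eq_mk_iff_sub_mem]
    refine U.toFilter.mem_of_superset hc ?_
    intro i hi
    simp only [Set.mem_compl_iff, Set.mem_setOf_eq] at *
    rw [Pi.sub_apply, Pi.mul_apply, Pi.one_apply, mul_inv_cancel₀ hi, sub_self]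

set_option maxHeartbeats 1000000 in
set_option synthInstance.maxHeartbeats 400000 in
theorem stmt2 (U : Ultrafilter Nat.Primes) (hU : ∀ s : Set Nat.Primes, s.Finite → s ∉ U) :
    Nonempty (ℂ ≃+* ((∀ p, FBar p) ⧸ ultraIdeal FBar U)) := by
  haveI hmax : (ultraIdeal FBar U).IsMaximal := ultraIdeal_isMaximal FBar U
  -- characteristic zero
  have hchar : CharZero ((∀ p, FBar p) ⧸ ultraIdeal FBar U) := by
    apply charZero_of_inj_zero
    intro n hn
    by_contra h0
    have hn' : ((n : ∀ p, FBar p)) ∈ ultraIdeal FBar U := by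
      rw [← Ideal.Quotient.eq_zero_iff_mem, map_natCast]; exact hn
    rw [mem_ultraIdeal] at hn'
    refine hU {p : Nat.Primes | (n : ∀ q, FBar q) p = 0} ?_ hn'
    have hfin : ({p : Nat.Primes | p.1 ≤ n}).Finite :=
      Set.Finite.preimage (Set.injOn_of_injective Subtype.val_injective) (Set.finite_Iic n)
    refine hfin.subset ?_
    intro p hp
    simp only [Set.mem_setOf_eq] at hp ⊢
    have h1 : ((n : ℕ) : FBar p) = 0 := by rw [← Pi.natCast_apply n p]; exact hp
    have h2 := (CharP.cast_eq_zero_iff (FBar p) p.1 n).mp h1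
    exact Nat.le_of_dvd (Nat.pos_of_ne_zero h0) h2
  -- cardinality
  have hcard : (Cardinal.mk ℂ) = Cardinal.mk ((∀ p, FBar p) ⧸ ultraIdeal FBar U) := by
    rw [Cardinal.mk_complex]
    refine le_antisymm ?_ ?_
    · -- lower bound: inject (ℕ → Bool)
      obtain ⟨e⟩ := nonempty_equiv_of_countable (α := ℕ) (β := Nat.Primes)
      set emb := fun p : Nat.Primes => Infinite.natEmbedding (FBar p) with hemb
      set F : (ℕ → Bool) → (∀ p, FBar p) := fun α p =>
        emb p (Encodable.encode (List.ofFn fun i : Fin (e.symm p) => α i)) with hF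
      have hinj : Function.Injective
          fun α : ℕ → Bool => Ideal.Quotient.mk (ultraIdeal FBar U) (F α) := by
        intro α β hab
        by_contra hne
        obtain ⟨m, hm⟩ := Function.ne_iff.mp hne
        have hab' : Ideal.Quotient.mk (ultraIdeal FBar U) (F α)
            = Ideal.Quotient.mk (ultraIdeal FBar U) (F β) := hab
        have hmem : F α - F β ∈ ultraIdeal FBar U := by
          rw [← Ideal.Quotient.eq_zero_iff_mem, map_sub, hab', sub_self]
        rw [mem_ultraIdeal] at hmem
        have hfin : ({p : Nat.Primes | e.symm p ≤ m}).Finite :=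
          Set.Finite.preimage (Set.injOn_of_injective e.symm.injective) (Set.finite_Iic m)
        refine hU _ (hfin.subset ?_) hmem
        intro p hp
        simp only [Set.mem_setOf_eq, Pi.sub_apply, sub_eq_zero] at hp
        simp only [Set.mem_setOf_eq]
        by_contra hgt
        push_neg at hgt
        have h1 := (emb p).injective hp
        have h2 := Encodable.encode_injective h1
        have h3 := List.ofFn_inj.mp h2
        exact hm (congrFun h3 ⟨m, hgt⟩)
      calc Cardinal.continuum = Cardinal.mk (ℕ → Bool) := by
            rw [← Cardinal.two_power_aleph0, ← Cardinal.mk_nat,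
              ← Cardinal.power_def, Cardinal.mk_bool]
        _ ≤ _ := Cardinal.mk_le_of_injective hinj
    · -- upper bound
      calc Cardinal.mk ((∀ p, FBar p) ⧸ ultraIdeal FBar U)
          ≤ Cardinal.mk (∀ p, FBar p) :=
            Cardinal.mk_le_of_surjective Ideal.Quotient.mk_surjective
        _ = Cardinal.prod (fun p => Cardinal.mk (FBar p)) := Cardinal.mk_pi _
        _ ≤ Cardinal.prod (fun _ : Nat.Primes => Cardinal.aleph0) :=
            Cardinal.prod_le_prod _ _ fbar_card
        _ = Cardinal.aleph0 ^ Cardinal.mk Nat.Primes := Cardinal.prod_const' _ _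
        _ = Cardinal.aleph0 ^ Cardinal.aleph0 := by
            congr 1
            exact Cardinal.mk_eq_aleph0 _
        _ = Cardinal.continuum := Cardinal.aleph0_power_aleph0
  -- now the field structure
  letI fQ : Field ((∀ p, FBar p) ⧸ ultraIdeal FBar U) := Ideal.Quotient.field _
  -- algebraically closed
  have halg : IsAlgClosed ((∀ p, FBar p) ⧸ ultraIdeal FBar U) := by
    apply IsAlgClosed.of_exists_root
    intro q hmon hirr
    have hn1 : 1 ≤ q.natDegree := hirr.natDegree_pos
    choose f hf using fun k =>
      Ideal.Quotient.mk_surjective (I := ultraIdeal FBar U) (q.coeff k)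
    have hlead : Ideal.Quotient.mk (ultraIdeal FBar U) (f q.natDegree) = 1 := by
      rw [hf q.natDegree]; exact hmon.coeff_natDegree
    have hS : {p : Nat.Primes | f q.natDegree p = 1} ∈ U := by
      have h1 : (f q.natDegree - 1) ∈ ultraIdeal FBar U := by
        rw [← Ideal.Quotient.mk_eq_mk_iff_sub_mem, hlead, map_one]
      rw [mem_ultraIdeal] at h1
      refine Filter.mem_of_superset h1 ?_
      intro p hp
      simp only [Set.mem_setOf_eq] at hp ⊢
      have h2 : f q.natDegree p - 1 = 0 := hp
      exact sub_eq_zero.mp h2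
    have hroot : ∀ p : Nat.Primes, ∃ x : FBar p,
        f q.natDegree p = 1 →
        (∑ k ∈ Finset.range (q.natDegree + 1), Polynomial.monomial k (f k p)).eval x = 0 := by
      intro p
      by_cases h : f q.natDegree p = 1
      · have hcoeff : (∑ k ∈ Finset.range (q.natDegree + 1),
            Polynomial.monomial k (f k p)).coeff q.natDegree = f q.natDegree p := by
          rw [Polynomial.finset_sum_coeff]
          simp [Polynomial.coeff_monomial]
        have hne : (∑ k ∈ Finset.range (q.natDegree + 1),
            Polynomial.monomial k (f k p)).degree ≠ 0 := by
          intro hd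
          have h1 : q.natDegree ≤ (∑ k ∈ Finset.range (q.natDegree + 1),
              Polynomial.monomial k (f k p)).natDegree :=
            Polynomial.le_natDegree_of_ne_zero (by rw [hcoeff, h]; exact one_ne_zero)
          have h2 : (∑ k ∈ Finset.range (q.natDegree + 1),
              Polynomial.monomial k (f k p)).natDegree = 0 :=
            Polynomial.natDegree_eq_zero_iff_degree_le_zero.mpr hd.le
          omega
        obtain ⟨x, hx⟩ := IsAlgClosed.exists_root _ hne
        exact ⟨x, fun _ => hx⟩
      · exact ⟨0, fun h' => absurd h' h⟩
    choose r hr using hroot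
    refine ⟨Ideal.Quotient.mk (ultraIdeal FBar U) r, ?_⟩
    have key : Ideal.Quotient.mk (ultraIdeal FBar U)
        (fun p => ∑ k ∈ Finset.range (q.natDegree + 1), f k p * (r p) ^ k)
        = q.eval (Ideal.Quotient.mk (ultraIdeal FBar U) r) := by
      have hfun : (fun p => ∑ k ∈ Finset.range (q.natDegree + 1), f k p * (r p) ^ k)
          = ∑ k ∈ Finset.range (q.natDegree + 1), f k * r ^ k := by
        funext p
        rw [Finset.sum_apply]
        rfl
      rw [hfun, map_sum, Polynomial.eval_eq_sum_range]
      refine Finset.sum_congr rfl fun k _ => ?_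
      rw [map_mul, map_pow, hf k]
    have hg : (fun p => ∑ k ∈ Finset.range (q.natDegree + 1), f k p * (r p) ^ k)
        ∈ ultraIdeal FBar U := by
      rw [mem_ultraIdeal]
      refine Filter.mem_of_superset hS ?_
      intro p hp
      simp only [Set.mem_setOf_eq] at hp ⊢
      have h4 := hr p hp
      rw [Polynomial.eval_finset_sum] at h4
      simpa [Polynomial.eval_monomial] using h4
    calc q.eval (Ideal.Quotient.mk (ultraIdeal FBar U) r)
        = Ideal.Quotient.mk (ultraIdeal FBar U)
            (fun p => ∑ k ∈ Finset.range (q.natDegree + 1), f k p * (r p) ^ k) := key.symm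
      _ = 0 := Ideal.Quotient.eq_zero_iff_mem.mpr hg
  have hlt : Cardinal.aleph0 < Cardinal.mk ℂ := by
    rw [Cardinal.mk_complex]; exact Cardinal.aleph0_lt_continuum
  haveI := hchar
  haveI := halg
  obtain ⟨eqv⟩ := IsAlgClosed.ringEquiv_of_equiv_of_charZero hlt (Cardinal.eq.mp hcard)
  exact ⟨{ toEquiv := eqv.toEquiv, map_mul' := eqv.map_mul', map_add' := eqv.map_add' }⟩
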